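/- Let (M, Q) be a measurable space with a probability measure Q, let d : M × M → [0,∞] be measurable and symmetric (d(p,q) = d(q,p)), and define the iterated kernels D_1 := d and D_{n+1}(p,q) := ∫_M D_n(p,r) d(r,q) Q(dr). Suppose p₀ ∈ M is an atom of Q, i.e. Q({p₀}) > 0 (with {p₀} measurable). Then the following are equivalent: (a) for Q-almost every q ∈ M there exists n ≥ 1 with D_n(p₀,q) > 0; (b) for Q⊗Q-almost every (p,q) ∈ M² there exists n ≥ 1 with D_n(p,q) > 0. -/

import Mathlib

open MeasureTheory
open scoped ENNReal

/-- Auxiliary iterated mark kernels: `DIterAux Q d k = D_{k+1}`, where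
`D_{n+1}(p,q) = ∫_M D_n(p,r) d(r,q) Q(dr)`. -/
noncomputable def DIterAux {M : Type*} [MeasurableSpace M] (Q : Measure M)
    (d : M → M → ℝ≥0∞) : ℕ → M → M → ℝ≥0∞
  | 0 => d
  | n + 1 => fun p q => ∫⁻ r, DIterAux Q d n p r * d r q ∂Q

/-- `DN Q d n = D_n` (meaningful for `n ≥ 1`): `D_1 = d`. -/
noncomputable def DN {M : Type*} [MeasurableSpace M] (Q : Measure M)
    (d : M → M → ℝ≥0∞) (n : ℕ) : M → M → ℝ≥0∞ :=
  DIterAux Q d (n - 1)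

section Aux

variable {M : Type*} [MeasurableSpace M] (Q : Measure M) [SFinite Q]
    (d : M → M → ℝ≥0∞) (hmeas : Measurable fun pq : M × M => d pq.1 pq.2)

include hmeas

lemma DIterAux_measurable (n : ℕ) :
    Measurable fun pq : M × M => DIterAux Q d n pq.1 pq.2 := by
  induction n with
  | zero => exact hmeas
  | succ n ih =>
    have h : Measurable fun x : (M × M) × M =>
        DIterAux Q d n x.1.1 x.2 * d x.2 x.1.2 :=
      (ih.comp ((measurable_fst.comp measurable_fst).prodMk measurable_snd)).mul
        (hmeas.comp (measurable_snd.prodMk (measurable_snd.comp measurable_fst)))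
    exact h.lintegral_prod_right'

/-- The key Fubini/Tonelli swap step. -/
lemma swap_helper (F G : M → M → ℝ≥0∞)
    (hF : Measurable fun z : M × M => F z.1 z.2)
    (hG : Measurable fun z : M × M => G z.1 z.2) (p q : M) :
    ∫⁻ r, (∫⁻ s, F p s * G s r ∂Q) * d r q ∂Q
      = ∫⁻ s, F p s * ∫⁻ r, G s r * d r q ∂Q ∂Q := by
  have hFp : ∀ s : M, Measurable fun r => F s r := fun s =>
    hF.comp (measurable_const.prodMk measurable_id)
  have hGsec : ∀ r : M, Measurable fun s => G s r := fun r =>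
    hG.comp (measurable_id.prodMk measurable_const)
  have hGsec' : ∀ s : M, Measurable fun r => G s r := fun s =>
    hG.comp (measurable_const.prodMk measurable_id)
  have hd : ∀ q : M, Measurable fun r => d r q := fun q =>
    hmeas.comp (measurable_id.prodMk measurable_const)
  calc
    ∫⁻ r, (∫⁻ s, F p s * G s r ∂Q) * d r q ∂Q
        = ∫⁻ r, ∫⁻ s, F p s * G s r * d r q ∂Q ∂Q := by
          refine lintegral_congr fun r => ?_
          exact (lintegral_mul_const _ ((hFp p).mul (hGsec r))).symm
    _ = ∫⁻ s, ∫⁻ r, F p s * G s r * d r q ∂Q ∂Q := by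
          refine lintegral_lintegral_swap ?_
          refine Measurable.aemeasurable ?_
          exact ((hF.comp (measurable_const.prodMk measurable_snd)).mul
            (hG.comp (measurable_snd.prodMk measurable_fst))).mul
            (hmeas.comp (measurable_fst.prodMk measurable_const))
    _ = ∫⁻ s, F p s * ∫⁻ r, G s r * d r q ∂Q ∂Q := by
          refine lintegral_congr fun s => ?_
          simp_rw [mul_assoc]
          exact lintegral_const_mul _ ((hGsec' s).mul (hd q))

/-- Chapman–Kolmogorov for the auxiliary kernels. -/
lemma DIterAux_add (a b : ℕ) : ∀ p q,
    DIterAux Q d (a + b + 1) p q = ∫⁻ r, DIterAux Q d a p r * DIterAux Q d b r q ∂Q := by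
  induction b with
  | zero => intro p q; rfl
  | succ b ih =>
    intro p q
    have h1 : DIterAux Q d (a + (b + 1) + 1) p q
        = ∫⁻ r, (∫⁻ s, DIterAux Q d a p s * DIterAux Q d b s r ∂Q) * d r q ∂Q := by
      show (∫⁻ r, DIterAux Q d (a + b + 1) p r * d r q ∂Q) = _
      exact lintegral_congr fun r => by rw [ih p r]
    rw [h1, swap_helper Q d hmeas _ _ (DIterAux_measurable Q d hmeas a)
      (DIterAux_measurable Q d hmeas b)]
    rfl

lemma DIterAux_symm (hsymm : ∀ p q, d p q = d q p) (n : ℕ) :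
    ∀ p q, DIterAux Q d n p q = DIterAux Q d n q p := by
  induction n with
  | zero => exact hsymm
  | succ n ih =>
    intro p q
    have h2 : DIterAux Q d (0 + n + 1) q p
        = ∫⁻ r, d q r * DIterAux Q d n r p ∂Q := DIterAux_add Q d hmeas 0 n q p
    show (∫⁻ r, DIterAux Q d n p r * d r q ∂Q) = DIterAux Q d (n + 1) q p
    have : DIterAux Q d (n + 1) q p = DIterAux Q d (0 + n + 1) q p := by norm_num
    rw [this, h2]
    exact lintegral_congr fun r => by rw [ih p r, hsymm r q, mul_comm]

omit hmeas [SFinite Q] in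
/-- Integral lower bound from an atom. -/
lemma lintegral_ge_atom (g : M → ℝ≥0∞) (p₀ : M) (hms : MeasurableSet ({p₀} : Set M)) :
    g p₀ * Q {p₀} ≤ ∫⁻ r, g r ∂Q := by
  have h1 : ∫⁻ r in {p₀}, g r ∂Q = g p₀ * Q {p₀} := by
    rw [setLIntegral_congr_fun hms ((fun r (hr : r ∈ ({p₀} : Set M)) => by
      rw [Set.mem_singleton_iff.mp hr] : ∀ r ∈ ({p₀} : Set M), g r = g p₀)),
      setLIntegral_const]
  rw [← h1]
  exact setLIntegral_le_lintegral _ _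

end Aux

/-- If `p₀` is an atom of `Q`, then positivity of some kernel iterate `D_n(p₀, q)` for
`Q`-a.e. `q` is equivalent to positivity of some `D_n(p,q)` for `Q⊗Q`-a.e. `(p,q)`. -/
theorem irreducibility_from_atom {M : Type*} [MeasurableSpace M]
    (Q : Measure M) [IsProbabilityMeasure Q]
    (d : M → M → ℝ≥0∞)
    (hmeas : Measurable fun pq : M × M => d pq.1 pq.2)
    (hsymm : ∀ p q, d p q = d q p)
    (p₀ : M) (hms : MeasurableSet ({p₀} : Set M)) (hatom : 0 < Q {p₀}) :
    (∀ᵐ q ∂Q, ∃ n : ℕ, 1 ≤ n ∧ 0 < DN Q d n p₀ q) ↔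
      (∀ᵐ pq ∂(Q.prod Q), ∃ n : ℕ, 1 ≤ n ∧ 0 < DN Q d n pq.1 pq.2) := by
  constructor
  · intro H
    -- transfer the a.e. hypothesis to both coordinates of the product
    have hQ1 : Q = (Q.prod Q).map Prod.fst := by
      rw [Measure.map_fst_prod]; simp
    have hQ2 : Q = (Q.prod Q).map Prod.snd := by
      rw [Measure.map_snd_prod]; simp
    obtain ⟨P, hP⟩ : ∃ P : M → Prop, P = fun q => ∃ n : ℕ, 1 ≤ n ∧ 0 < DN Q d n p₀ q :=
      ⟨_, rfl⟩
    rw [← hP] at H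
    have H1 : ∀ᵐ pq ∂(Q.prod Q), P pq.1 := by
      refine ae_of_ae_map measurable_fst.aemeasurable ?_
      rwa [← hQ1]
    have H2 : ∀ᵐ pq ∂(Q.prod Q), P pq.2 := by
      refine ae_of_ae_map measurable_snd.aemeasurable ?_
      rwa [← hQ2]
    rw [hP] at H1 H2
    filter_upwards [H1, H2] with pq h1 h2
    obtain ⟨m, hm1, hm⟩ := h1
    obtain ⟨n, hn1, hn⟩ := h2
    refine ⟨m + n, by omega, ?_⟩
    have hmn : m + n - 1 = (m - 1) + (n - 1) + 1 := by omega
    have hCK : DN Q d (m + n) pq.1 pq.2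
        = ∫⁻ r, DIterAux Q d (m - 1) pq.1 r * DIterAux Q d (n - 1) r pq.2 ∂Q := by
      show DIterAux Q d (m + n - 1) pq.1 pq.2 = _
      rw [hmn]
      exact DIterAux_add Q d hmeas (m - 1) (n - 1) pq.1 pq.2
    have hlow := lintegral_ge_atom Q
      (fun r => DIterAux Q d (m - 1) pq.1 r * DIterAux Q d (n - 1) r pq.2) p₀ hms
    rw [hCK]
    refine lt_of_lt_of_le ?_ hlow
    have hmpos : 0 < DIterAux Q d (m - 1) pq.1 p₀ := by
      rw [DIterAux_symm Q d hmeas hsymm (m - 1) pq.1 p₀]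
      exact hm
    exact ENNReal.mul_pos (ENNReal.mul_pos hmpos.ne' hn.ne').ne' hatom.ne'
  · intro H
    have H2 := Measure.ae_ae_of_ae_prod H
    by_contra hcon
    have : p₀ ∈ {p : M | ¬ ∀ᵐ q ∂Q, ∃ n : ℕ, 1 ≤ n ∧ 0 < DN Q d n p q} := hcon
    have hz : Q {p : M | ¬ ∀ᵐ q ∂Q, ∃ n : ℕ, 1 ≤ n ∧ 0 < DN Q d n p q} = 0 :=
      ae_iff.mp H2
    have := measure_mono (Set.singleton_subset_iff.mpr this) (μ := Q)
    rw [hz] at this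
    exact absurd (le_antisymm this zero_le) hatom.ne'
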